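/- Let (β_m) be any sequence of reals strictly decreasing to 0. Then there exists a closed, nowhere dense set A ⊆ [0,1] such that for every sequence (α_m) converging to 0 with |α_m| = O(β_m), there exist δ > 0 and t ∈ ℝ with t + δα_m ∈ A for all m. -/

import Mathlib

open Set Filter

-- Auxiliary constructions
open Set Filter MeasureTheory

namespace NwdAffine

/-! Auxiliary machinery for constructing a closed nowhere dense subset of `[0,1]`
containing affine copies of all null sequences dominated by a fixed sequence `β`. -/

/-- `phi L x` is the offset of `x` within its period-`L` cell. -/
noncomputable def phi (L x : ℝ) : ℝ := x - L * (⌊x / L⌋ : ℤ)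

lemma phi_nonneg {L : ℝ} (hL : 0 < L) (x : ℝ) : 0 ≤ phi L x := by
  have h : (⌊x / L⌋ : ℝ) ≤ x / L := Int.floor_le _
  have := mul_le_mul_of_nonneg_left h hL.le
  rw [mul_div_cancel₀ _ hL.ne'] at this
  simpa [phi] using this

lemma phi_lt {L : ℝ} (hL : 0 < L) (x : ℝ) : phi L x < L := by
  have h : x / L < (⌊x / L⌋ : ℝ) + 1 := Int.lt_floor_add_one _
  have := mul_lt_mul_of_pos_left h hL
  rw [mul_div_cancel₀ _ hL.ne'] at this
  simp only [phi]
  nlinarith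

lemma floor_div_eq {L x : ℝ} (hL : 0 < L) {j : ℤ} (h1 : (j : ℝ) * L ≤ x)
    (h2 : x < ((j : ℝ) + 1) * L) : ⌊x / L⌋ = j := by
  rw [Int.floor_eq_iff]
  constructor
  · rw [le_div_iff₀ hL]; linarith
  · rw [div_lt_iff₀ hL]; linarith

lemma phi_eq {L x : ℝ} (hL : 0 < L) {j : ℤ} (h1 : (j : ℝ) * L ≤ x)
    (h2 : x < ((j : ℝ) + 1) * L) : phi L x = x - (j : ℝ) * L := by
  rw [phi, floor_div_eq hL h1 h2]; ring

lemma phi_add {L t γ a b : ℝ} (hL : 0 < L) (ha : a ≤ phi L t) (hb : phi L t ≤ b)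
    (hγ : |γ| ≤ a) (hbL : a + b < L) : phi L (t + γ) = phi L t + γ := by
  set j : ℤ := ⌊t / L⌋ with hj
  have hphit : phi L t = t - L * (j : ℝ) := rfl
  have habs := abs_le.mp hγ
  have h1 : (j : ℝ) * L ≤ t + γ := by nlinarith [habs.1, habs.2]
  have h2 : t + γ < ((j : ℝ) + 1) * L := by nlinarith [habs.1, habs.2]
  rw [phi_eq hL h1 h2, hphit]; ring

/-- the sublevel sets of `phi` are closed. -/
lemma isClosed_phi_le {L c : ℝ} (hL : 0 < L) (hc : 0 ≤ c) :
    IsClosed {x : ℝ | phi L x ≤ c} := by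
  rw [← isOpen_compl_iff, isOpen_iff_forall_mem_open]
  intro x hx
  simp only [mem_compl_iff, mem_setOf_eq, not_le] at hx
  set j : ℤ := ⌊x / L⌋ with hj
  have hphix : phi L x = x - L * (j : ℝ) := rfl
  refine ⟨Ioo ((j : ℝ) * L + c) (((j : ℝ) + 1) * L), ?_, isOpen_Ioo, ?_⟩
  · intro y hy
    obtain ⟨hy1, hy2⟩ := hy
    have hfl : ⌊y / L⌋ = j := floor_div_eq hL (by nlinarith) hy2
    have hphiy : phi L y = y - L * (j : ℝ) := by rw [phi, hfl]
    simp only [mem_compl_iff, mem_setOf_eq, not_le, hphiy]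
    nlinarith
  · have h1 : phi L x < L := phi_lt hL x
    exact ⟨by nlinarith, by nlinarith⟩

open Classical in
/-- choose an index where `β` is at most `x` (when one exists). -/
noncomputable def pickIdx (β : ℕ → ℝ) (x : ℝ) : ℕ :=
  if h : ∃ n, β n ≤ x then h.choose else 0

lemma pickIdx_spec (β : ℕ → ℝ) {x : ℝ} (h : ∃ n, β n ≤ x) : β (pickIdx β x) ≤ x := by
  rw [pickIdx, dif_pos h]; exact h.choose_spec

/-- the scales of the construction. -/
noncomputable def Lseq (β : ℕ → ℝ) : ℕ → ℝ
  | 0 => 1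
  | k + 1 => Lseq β k / (2 ^ (k + 10) * ((pickIdx β (Lseq β k / 2 ^ (k + 10)) : ℝ) + 2))

/-- the index cutoffs of the construction. -/
noncomputable def nseq (β : ℕ → ℝ) (k : ℕ) : ℕ := pickIdx β (Lseq β k / 2 ^ (k + 10))

lemma Lseq_zero (β : ℕ → ℝ) : Lseq β 0 = 1 := rfl

lemma Lseq_succ (β : ℕ → ℝ) (k : ℕ) :
    Lseq β (k + 1) = Lseq β k / (2 ^ (k + 10) * ((nseq β k : ℝ) + 2)) := rfl

lemma Lseq_pos (β : ℕ → ℝ) (k : ℕ) : 0 < Lseq β k := by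
  induction k with
  | zero => norm_num [Lseq_zero]
  | succ k ih =>
    rw [Lseq_succ]
    apply div_pos ih
    positivity

lemma Lseq_succ_le (β : ℕ → ℝ) (k : ℕ) : Lseq β (k + 1) ≤ Lseq β k / 2 := by
  rw [Lseq_succ]
  apply div_le_div_of_nonneg_left (Lseq_pos β k).le (by norm_num)
  have h1 : (2:ℝ) ≤ 2 ^ (k + 10) := le_self_pow₀ (by norm_num) (by omega)
  nlinarith [show (0:ℝ) ≤ (nseq β k : ℝ) from Nat.cast_nonneg _]

lemma Lseq_le_one (β : ℕ → ℝ) (k : ℕ) : Lseq β k ≤ 1 := by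
  induction k with
  | zero => norm_num [Lseq_zero]
  | succ k ih =>
    have := Lseq_succ_le β k
    linarith

lemma Lseq_le_pow (β : ℕ → ℝ) (k : ℕ) : Lseq β k ≤ (1 / 2) ^ k := by
  induction k with
  | zero => norm_num [Lseq_zero]
  | succ k ih =>
    have := Lseq_succ_le β k
    calc Lseq β (k+1) ≤ (1/2)^k / 2 := by linarith
    _ = (1/2)^(k+1) := by ring

/-- the set of bad translation parameters for one window constraint. -/
def badSet (L a b γ : ℝ) : Set ℝ :=
  {t | t ∈ Icc (4⁻¹ : ℝ) 2⁻¹ ∧ ¬(a ≤ phi L (t + γ) ∧ phi L (t + γ) ≤ b)}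

lemma vol_badSet (L a b γ : ℝ) (hL : 0 < L) (hL1 : L ≤ 1) (ha : 0 ≤ a) (hb : b ≤ L) :
    volume (badSet L a b γ) ≤ ENNReal.ofReal (3 / L * (a + (L - b))) := by
  set j₀ : ℤ := ⌊(4⁻¹ + γ) / L⌋ with hj₀
  set j₁ : ℤ := ⌊(2⁻¹ + γ) / L⌋ with hj₁
  have habL : 0 ≤ a + (L - b) := by linarith
  have hsub : badSet L a b γ ⊆ ⋃ j ∈ Finset.Icc j₀ j₁,
      (Ico ((j : ℝ) * L - γ) ((j : ℝ) * L + a - γ) ∪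
       Ioc ((j : ℝ) * L + b - γ) ((j : ℝ) * L + L - γ)) := by
    rintro t ⟨⟨ht1, ht2⟩, hbad⟩
    set j : ℤ := ⌊(t + γ) / L⌋ with hj
    have hmem : j ∈ Finset.Icc j₀ j₁ := by
      rw [Finset.mem_Icc]
      constructor
      · apply Int.floor_mono; gcongr
      · apply Int.floor_mono; gcongr
    have h0 : 0 ≤ phi L (t + γ) := phi_nonneg hL _
    have h1 : phi L (t + γ) < L := phi_lt hL _
    have hphi : phi L (t + γ) = t + γ - L * (j : ℝ) := rfl
    refine Set.mem_biUnion hmem ?_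
    rcases not_and_or.mp hbad with h | h
    · left
      push_neg at h
      constructor
      · nlinarith
      · nlinarith
    · right
      push_neg at h
      constructor
      · nlinarith
      · nlinarith
  have hcard : ((Finset.Icc j₀ j₁).card : ℝ) ≤ 3 / L := by
    rcases le_or_gt (j₁ + 1 - j₀) 0 with h | h
    · rw [Int.card_Icc, Int.toNat_of_nonpos h]
      simp only [Nat.cast_zero]
      positivity
    · rw [Int.card_Icc]
      have hcast : ((j₁ + 1 - j₀).toNat : ℝ) = ((j₁ : ℝ) + 1 - j₀) := by
        rw [← Int.cast_natCast, Int.toNat_of_nonneg h.le]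
        push_cast; ring
      rw [hcast]
      have e1 : (j₁ : ℝ) ≤ (2⁻¹ + γ) / L := Int.floor_le _
      have e2 : (4⁻¹ + γ) / L - 1 < (j₀ : ℝ) := by
        have h5 := Int.lt_floor_add_one ((4⁻¹ + γ) / L)
        rw [← hj₀] at h5
        linarith
      have e3 : (2⁻¹ + γ) / L - (4⁻¹ + γ) / L = 4⁻¹ / L := by
        field_simp; ring
      have e4 : (3:ℝ)/L - 4⁻¹/L - 2 = (11/4 - 2*L)/L := by field_simp; ring
      have e5 : (0:ℝ) ≤ (11/4 - 2*L)/L := by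
        apply div_nonneg _ hL.le; linarith
      linarith
  calc volume (badSet L a b γ)
      ≤ volume (⋃ j ∈ Finset.Icc j₀ j₁,
        (Ico ((j : ℝ) * L - γ) ((j : ℝ) * L + a - γ) ∪
         Ioc ((j : ℝ) * L + b - γ) ((j : ℝ) * L + L - γ))) := measure_mono hsub
    _ ≤ ∑ j ∈ Finset.Icc j₀ j₁, volume
        (Ico ((j : ℝ) * L - γ) ((j : ℝ) * L + a - γ) ∪
         Ioc ((j : ℝ) * L + b - γ) ((j : ℝ) * L + L - γ)) :=
        measure_biUnion_finset_le _ _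
    _ ≤ ∑ j ∈ Finset.Icc j₀ j₁, ENNReal.ofReal (a + (L - b)) := by
        apply Finset.sum_le_sum
        intro j _
        calc volume (Ico ((j : ℝ) * L - γ) ((j : ℝ) * L + a - γ) ∪
              Ioc ((j : ℝ) * L + b - γ) ((j : ℝ) * L + L - γ))
            ≤ volume (Ico ((j : ℝ) * L - γ) ((j : ℝ) * L + a - γ)) +
              volume (Ioc ((j : ℝ) * L + b - γ) ((j : ℝ) * L + L - γ)) := measure_union_le _ _
          _ = ENNReal.ofReal a + ENNReal.ofReal (L - b) := by
              rw [Real.volume_Ico, Real.volume_Ioc]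
              congr 1 <;> congr 1 <;> ring
          _ = ENNReal.ofReal (a + (L - b)) := (ENNReal.ofReal_add ha (by linarith)).symm
    _ = ((Finset.Icc j₀ j₁).card : ℕ) • ENNReal.ofReal (a + (L - b)) := by
        rw [Finset.sum_const]
    _ ≤ ENNReal.ofReal (3 / L * (a + (L - b))) := by
        rw [nsmul_eq_mul, ← ENNReal.ofReal_natCast, ← ENNReal.ofReal_mul (by positivity)]
        apply ENNReal.ofReal_le_ofReal
        apply mul_le_mul_of_nonneg_right hcard habL

/-- the arithmetic estimate for the total bad volume at level `k`. -/
lemma arith (L Ls : ℝ) (n k : ℕ) (hL : 0 < L)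
    (hLs : Ls = L / (2 ^ (k + 10) * ((n : ℝ) + 2))) :
    3 / L * (L / 2 ^ (k + 10) + (L - ((L - Ls) - L / 2 ^ (k + 10)))) +
      (n : ℝ) * (3 / L * (0 + (L - (L - Ls)))) ≤ (1 / 2) ^ k * (1 / 64) := by
  subst hLs
  have h2p : (0:ℝ) < 2 ^ (k + 10) := by positivity
  have hn2 : (0:ℝ) < (n : ℝ) + 2 := by positivity
  have hsimp : 3 / L * (L / 2 ^ (k + 10) +
        (L - ((L - L / (2 ^ (k + 10) * ((n : ℝ) + 2))) - L / 2 ^ (k + 10)))) +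
      (n : ℝ) * (3 / L * (0 + (L - (L - L / (2 ^ (k + 10) * ((n : ℝ) + 2)))))) =
      (6 * ((n : ℝ) + 2) + 3 + 3 * (n : ℝ)) / (2 ^ (k + 10) * ((n : ℝ) + 2)) := by
    field_simp
    ring
  rw [hsimp, div_le_iff₀ (by positivity)]
  have hpk : (1/2:ℝ) ^ k * (1/64) * (2 ^ (k + 10) * ((n : ℝ) + 2)) = 16 * ((n : ℝ) + 2) := by
    rw [pow_add, one_div, inv_pow]
    field_simp
    ring
  rw [hpk]
  nlinarith [show (0:ℝ) ≤ (n : ℝ) from Nat.cast_nonneg _]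

end NwdAffine

open Set Filter MeasureTheory NwdAffine in
theorem exists_closed_nowhereDense_containing_affine_copies
    (β : ℕ → ℝ) (hanti : StrictAnti β) (hlim : Tendsto β atTop (nhds 0)) :
    ∃ A : Set ℝ, IsClosed A ∧ IsNowhereDense A ∧ A ⊆ Icc 0 1 ∧
      ∀ α : ℕ → ℝ, Tendsto α atTop (nhds 0) →
        (∃ C : ℝ, 0 < C ∧ ∀ m, |α m| ≤ C * β m) →
        ∃ δ t : ℝ, 0 < δ ∧ ∀ m, t + δ * α m ∈ A := by
  -- basic facts about β
  have hβnn : ∀ m, 0 ≤ β m := by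
    intro m
    apply le_of_tendsto hlim
    filter_upwards [eventually_ge_atTop m] with n hn
    exact hanti.antitone hn
  have hβpos : ∀ m, 0 < β m := fun m => (hβnn (m+1)).trans_lt (hanti (Nat.lt_succ_self m))
  have hex : ∀ x : ℝ, 0 < x → ∃ n, β n ≤ x := by
    intro x hx
    obtain ⟨n, hn⟩ := (hlim.eventually (gt_mem_nhds hx)).exists
    exact ⟨n, hn.le⟩
  -- notation (as fresh variables, to keep linarith happy)
  obtain ⟨L, hLdef⟩ : ∃ f : ℕ → ℝ, f = Lseq β := ⟨_, rfl⟩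
  obtain ⟨n, hndef⟩ : ∃ f : ℕ → ℕ, f = nseq β := ⟨_, rfl⟩
  obtain ⟨r, hrdef⟩ : ∃ f : ℕ → ℝ, f = fun k => L k / 2 ^ (k + 10) := ⟨_, rfl⟩
  obtain ⟨c, hcdef⟩ : ∃ f : ℕ → ℝ, f = fun k => L k - L (k + 1) := ⟨_, rfl⟩
  have hLpos : ∀ k, 0 < L k := by rw [hLdef]; exact Lseq_pos β
  have hL1 : ∀ k, L k ≤ 1 := by rw [hLdef]; exact Lseq_le_one β
  have hrk : ∀ k, r k = L k / 2 ^ (k + 10) := by rw [hrdef]; intro k; rfl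
  have hck : ∀ k, c k = L k - L (k + 1) := by rw [hcdef]; intro k; rfl
  have h2pow : ∀ k : ℕ, (0:ℝ) < 2 ^ (k + 10) := fun k => by positivity
  have h2pow10 : ∀ k : ℕ, (1024:ℝ) ≤ 2 ^ (k + 10) := by
    intro k
    calc (1024:ℝ) = 2 ^ 10 := by norm_num
    _ ≤ 2 ^ (k + 10) := by
        apply pow_le_pow_right₀ (by norm_num)
        omega
  have hnspec : ∀ k, β (n k) ≤ r k := by
    intro k
    rw [hndef, hrk k, hLdef]
    exact pickIdx_spec β (hex _ (div_pos (Lseq_pos β k) (h2pow k)))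
  have hLsucc : ∀ k, L (k + 1) = L k / (2 ^ (k + 10) * ((n k : ℝ) + 2)) := by
    rw [hLdef, hndef]; exact Lseq_succ β
  have hrpos : ∀ k, 0 < r k := fun k => by
    rw [hrk]; exact div_pos (hLpos k) (h2pow k)
  have hLsucc_le_r : ∀ k, L (k + 1) ≤ r k := by
    intro k
    rw [hLsucc k, hrk k]
    apply div_le_div_of_nonneg_left (hLpos k).le (h2pow k)
    nlinarith [show (0:ℝ) ≤ (n k : ℝ) from Nat.cast_nonneg _, h2pow k]
  have hr_small : ∀ k, 1024 * r k ≤ L k := by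
    intro k
    rw [hrk k, ← mul_div_assoc, div_le_iff₀ (h2pow k)]
    nlinarith [h2pow10 k, hLpos k]
  have hLsuccpos : ∀ k, 0 < L (k + 1) := fun k => hLpos (k + 1)
  have hcltL : ∀ k, c k < L k := fun k => by
    rw [hck]; have := hLsuccpos k; linarith
  have hcr : ∀ k, 2 * r k ≤ c k := by
    intro k
    have h1 := hLsucc_le_r k
    have h2 := hr_small k
    have h3 := hrpos k
    rw [hck]
    linarith
  have hcpos : ∀ k, 0 ≤ c k := fun k => le_trans (by nlinarith [hrpos k]) (hcr k)
  have hcler : ∀ k, r k + (c k - r k) < L k := fun k => by have := hcltL k; linarith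
  -- the set A
  have hclosed : IsClosed (Icc 0 1 ∩ ⋂ k, {x : ℝ | phi (L k) x ≤ c k}) :=
    isClosed_Icc.inter (isClosed_iInter fun k => isClosed_phi_le (hLpos k) (hcpos k))
  refine ⟨Icc 0 1 ∩ ⋂ k, {x : ℝ | phi (L k) x ≤ c k}, hclosed, ?_, inter_subset_left, ?_⟩
  · -- nowhere dense
    rw [hclosed.isNowhereDense_iff, eq_empty_iff_forall_notMem]
    intro x hx
    rw [mem_interior_iff_mem_nhds, Metric.mem_nhds_iff] at hx
    obtain ⟨ε, hε, hball⟩ := hx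
    obtain ⟨k, hk⟩ : ∃ k, L k < ε := by
      obtain ⟨k, hk⟩ := exists_pow_lt_of_lt_one hε (show (1/2:ℝ) < 1 by norm_num)
      refine ⟨k, lt_of_le_of_lt ?_ hk⟩
      rw [hLdef]
      exact Lseq_le_pow β k
    have hx0 : 0 ≤ phi (L k) x := phi_nonneg (hLpos k) x
    have hx1 : phi (L k) x < L k := phi_lt (hLpos k) x
    have hphix : phi (L k) x = x - L k * (⌊x / L k⌋ : ℝ) := rfl
    have hyj : (⌊x / L k⌋ : ℝ) * L k ≤ (⌊x / L k⌋ : ℝ) * L k + (c k + L k) / 2 := by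
      nlinarith [hcpos k, hLpos k]
    have hyj2 : (⌊x / L k⌋ : ℝ) * L k + (c k + L k) / 2 < ((⌊x / L k⌋ : ℝ) + 1) * L k := by
      nlinarith [hcltL k, hLpos k]
    have hyphi : phi (L k) ((⌊x / L k⌋ : ℝ) * L k + (c k + L k) / 2) = (c k + L k) / 2 := by
      rw [phi_eq (hLpos k) hyj hyj2]; ring
    have hymem : (⌊x / L k⌋ : ℝ) * L k + (c k + L k) / 2 ∈ Metric.ball x ε := by
      rw [Metric.mem_ball, Real.dist_eq, abs_lt]
      constructor
      · nlinarith [hcpos k, hLpos k]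
      · nlinarith [hcltL k, hLpos k]
    have hmemA := hball hymem
    have hyc : phi (L k) ((⌊x / L k⌋ : ℝ) * L k + (c k + L k) / 2) ≤ c k := by
      have h2 := hmemA.2
      rw [mem_iInter] at h2
      exact h2 k
    rw [hyphi] at hyc
    have := hcltL k
    linarith
  · -- main property
    rintro α _ ⟨C, hC, hαC⟩
    have hβ0 := hβpos 0
    obtain ⟨K, hK⟩ : ∃ K : ℝ, K = (8 * (β 0 + 1))⁻¹ := ⟨_, rfl⟩
    have h8pos : (0:ℝ) < 8 * (β 0 + 1) := by nlinarith
    have hKpos : 0 < K := by rw [hK]; exact inv_pos.2 h8pos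
    have hKmul : K * (8 * (β 0 + 1)) = 1 := by rw [hK]; exact inv_mul_cancel₀ h8pos.ne'
    have hKle1 : K ≤ 1 := by nlinarith
    have hKβ : K * β 0 ≤ 8⁻¹ := by nlinarith
    obtain ⟨γ, hγ⟩ : ∃ g : ℕ → ℝ, g = fun m => K / C * α m := ⟨_, rfl⟩
    have hγm : ∀ m, γ m = K / C * α m := by rw [hγ]; intro m; rfl
    have hγK : ∀ m, |γ m| ≤ K * β m := by
      intro m
      rw [hγm, abs_mul, abs_of_pos (by positivity : (0:ℝ) < K / C)]
      calc K / C * |α m| ≤ K / C * (C * β m) := by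
            apply mul_le_mul_of_nonneg_left (hαC m) (by positivity)
        _ = K * β m := by field_simp
    have hγ8 : ∀ m, |γ m| ≤ 8⁻¹ := by
      intro m
      calc |γ m| ≤ K * β m := hγK m
        _ ≤ K * β 0 := by
            apply mul_le_mul_of_nonneg_left _ hKpos.le
            exact hanti.antitone (Nat.zero_le m)
        _ ≤ 8⁻¹ := hKβ
    -- bad sets
    have hBadk : ∀ k, volume (badSet (L k) (r k) (c k - r k) 0 ∪
        ⋃ m ∈ Finset.range (n k), badSet (L k) 0 (c k) (γ m)) ≤
        ENNReal.ofReal ((1/2) ^ k * (1/64)) := by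
      intro k
      have hb1 : c k - r k ≤ L k := by have := hcltL k; have := hrpos k; linarith
      have hb2 : c k ≤ L k := (hcltL k).le
      have e1 := vol_badSet (L k) (r k) (c k - r k) 0 (hLpos k) (hL1 k) (hrpos k).le hb1
      have e2 : volume (⋃ m ∈ Finset.range (n k), badSet (L k) 0 (c k) (γ m)) ≤
          (n k) • ENNReal.ofReal (3 / L k * (0 + (L k - c k))) := by
        calc volume (⋃ m ∈ Finset.range (n k), badSet (L k) 0 (c k) (γ m))
            ≤ ∑ m ∈ Finset.range (n k), volume (badSet (L k) 0 (c k) (γ m)) :=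
              measure_biUnion_finset_le _ _
          _ ≤ ∑ m ∈ Finset.range (n k), ENNReal.ofReal (3 / L k * (0 + (L k - c k))) :=
              Finset.sum_le_sum fun m _ => vol_badSet _ _ _ _ (hLpos k) (hL1 k) le_rfl hb2
          _ = (n k) • ENNReal.ofReal (3 / L k * (0 + (L k - c k))) := by
              rw [Finset.sum_const, Finset.card_range]
      have h3L : (0:ℝ) ≤ 3 / L k := div_nonneg (by norm_num) (hLpos k).le
      have hX0 : 0 ≤ 3 / L k * (r k + (L k - (c k - r k))) := by
        apply mul_nonneg h3L
        have := hrpos k; have := hcltL k; linarith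
      have hY0 : 0 ≤ 3 / L k * (0 + (L k - c k)) := by
        apply mul_nonneg h3L
        have := hcltL k; linarith
      calc volume (badSet (L k) (r k) (c k - r k) 0 ∪
            ⋃ m ∈ Finset.range (n k), badSet (L k) 0 (c k) (γ m))
          ≤ volume (badSet (L k) (r k) (c k - r k) 0) +
            volume (⋃ m ∈ Finset.range (n k), badSet (L k) 0 (c k) (γ m)) :=
            measure_union_le _ _
        _ ≤ ENNReal.ofReal (3 / L k * (r k + (L k - (c k - r k)))) +
            (n k) • ENNReal.ofReal (3 / L k * (0 + (L k - c k))) := add_le_add e1 e2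
        _ = ENNReal.ofReal (3 / L k * (r k + (L k - (c k - r k))) +
            (n k : ℝ) * (3 / L k * (0 + (L k - c k)))) := by
            rw [nsmul_eq_mul, ← ENNReal.ofReal_natCast (n k),
              ← ENNReal.ofReal_mul (Nat.cast_nonneg _),
              ← ENNReal.ofReal_add hX0 (mul_nonneg (Nat.cast_nonneg _) hY0)]
        _ ≤ ENNReal.ofReal ((1/2) ^ k * (1/64)) := by
            apply ENNReal.ofReal_le_ofReal
            have harith := arith (L k) (L (k + 1)) (n k) k (hLpos k) (hLsucc k)
            rw [hrk k, hck k]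
            exact harith
    have htotal : volume (⋃ k, (badSet (L k) (r k) (c k - r k) 0 ∪
        ⋃ m ∈ Finset.range (n k), badSet (L k) 0 (c k) (γ m))) ≤ ENNReal.ofReal (1/32) := by
      calc volume (⋃ k, (badSet (L k) (r k) (c k - r k) 0 ∪
          ⋃ m ∈ Finset.range (n k), badSet (L k) 0 (c k) (γ m)))
          ≤ ∑' k, volume (badSet (L k) (r k) (c k - r k) 0 ∪
            ⋃ m ∈ Finset.range (n k), badSet (L k) 0 (c k) (γ m)) := measure_iUnion_le _
        _ ≤ ∑' k, ENNReal.ofReal ((1/2) ^ k * (1/64)) := ENNReal.tsum_le_tsum hBadk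
        _ = ENNReal.ofReal (∑' k : ℕ, (1/2 : ℝ) ^ k * (1/64)) :=
            (ENNReal.ofReal_tsum_of_nonneg (fun k => by positivity)
              ((summable_geometric_of_lt_one (by norm_num) (by norm_num)).mul_right _)).symm
        _ ≤ ENNReal.ofReal (1/32) := by
            apply ENNReal.ofReal_le_ofReal
            rw [tsum_mul_right, tsum_geometric_of_lt_one (by norm_num) (by norm_num)]
            norm_num
    have hne : ¬ (Icc (4⁻¹:ℝ) 2⁻¹ ⊆ ⋃ k, (badSet (L k) (r k) (c k - r k) 0 ∪
        ⋃ m ∈ Finset.range (n k), badSet (L k) 0 (c k) (γ m))) := by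
      intro hsub
      have h1 := (measure_mono hsub).trans htotal
      rw [Real.volume_Icc, ENNReal.ofReal_le_ofReal_iff (by norm_num)] at h1
      norm_num at h1
    obtain ⟨t, htI, htBad⟩ := not_subset.mp hne
    -- extract the good properties of t
    have hE : ∀ k, r k ≤ phi (L k) t ∧ phi (L k) t ≤ c k - r k := by
      intro k
      by_contra hcon
      exact htBad (mem_iUnion.2 ⟨k, Set.mem_union_left _
        ⟨htI, by rw [add_zero]; exact hcon⟩⟩)
    have hM : ∀ k m, m < n k → phi (L k) (t + γ m) ≤ c k := by
      intro k m hm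
      by_contra hcon
      refine htBad (mem_iUnion.2 ⟨k, Set.mem_union_right _ ?_⟩)
      refine Set.mem_biUnion ?_ ⟨htI, fun hh => hcon hh.2⟩
      exact Finset.mem_range.2 hm
    -- conclude
    obtain ⟨ht1, ht2⟩ := htI
    refine ⟨K / C, t, by positivity, ?_⟩
    intro m
    have htγ : t + K / C * α m = t + γ m := by rw [hγm]
    rw [htγ]
    have habs := abs_le.mp (hγ8 m)
    refine ⟨⟨?_, ?_⟩, ?_⟩
    · have : (0:ℝ) < 4⁻¹ - 8⁻¹ := by norm_num
      linarith [habs.1]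
    · have : (2⁻¹:ℝ) + 8⁻¹ ≤ 1 := by norm_num
      linarith [habs.2]
    · rw [mem_iInter]
      intro k
      simp only [mem_setOf_eq]
      rcases lt_or_ge m (n k) with hm | hm
      · exact hM k m hm
      · -- cluster case
        have hγr : |γ m| ≤ r k := by
          calc |γ m| ≤ K * β m := hγK m
            _ ≤ β m := by nlinarith [hβnn m]
            _ ≤ β (n k) := hanti.antitone hm
            _ ≤ r k := hnspec k
        have heq := phi_add (hLpos k) (hE k).1 (hE k).2 hγr (hcler k)
        rw [heq]
        have h1 := (hE k).2
        have h2 := le_abs_self (γ m)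
        linarith
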